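/- (First- and second-order variations of the IB objective.) For a perturbation h(z|x) of the encoder p(z|x), the first-order variation is δIB_β[p(z|x)] = ∫ dx dz p(x) h(z|x) log(p(z|x)/p(z)) − β ∫ dx dy dz p(x,y) h(z|x) log(p(z|y)/p(z)), and the second-order variation is δ²IB_β[p(z|x)] = (1/2)[ ∫ dx dz (p(x)²/p(x,z)) h(z|x)² − β ∫ dx dx' dy dz (p(x,y)p(x',y)/p(y,z)) h(z|x) h(z|x') + (β−1) ∫ dx dx' dz (p(x)p(x')/p(z)) h(z|x) h(z|x') ]. -/

import Mathlib

open Filter Asymptotics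
open scoped BigOperators Topology

/-- A joint probability distribution `p(x,y)` on finite types `X` and `Y`. -/
structure JointDist (X Y : Type) [Fintype X] [Fintype Y] where
  p : X → Y → ℝ
  nonneg : ∀ x y, 0 ≤ p x y
  sum_one : ∑ x, ∑ y, p x y = 1

variable {X Y Z : Type} [Fintype X] [Fintype Y] [Fintype Z]

/-- The marginal distribution `p(x)` of `X`. -/
def JointDist.pX (P : JointDist X Y) (x : X) : ℝ := ∑ y, P.p x y

/-- The marginal distribution `p(y)` of `Y`. -/
def JointDist.pY (P : JointDist X Y) (y : Y) : ℝ := ∑ x, P.p x y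

/-- An encoder: a conditional distribution `p(z|x)` specifying a representation `Z` of `X`;
together with `p(x,y)` it determines the Markov chain `Z ← X ↔ Y`. -/
structure Encoder (X Z : Type) [Fintype X] [Fintype Z] where
  c : X → Z → ℝ
  nonneg : ∀ x z, 0 ≤ c x z
  sum_one : ∀ x, ∑ z, c x z = 1

/-- The mutual information `I(X;Z)` of the representation given by encoder `e`,
where `p(x,z) = p(x) p(z|x)` and `p(z) = ∑ x, p(x) p(z|x)`. -/
noncomputable def IXZ (P : JointDist X Y) (e : Encoder X Z) : ℝ :=
  ∑ x, ∑ z, P.pX x * e.c x z *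
    Real.log (P.pX x * e.c x z / (P.pX x * ∑ x', P.pX x' * e.c x' z))

/-- The mutual information `I(Y;Z)`, using the Markov chain `Z ← X ↔ Y`,
i.e. `p(y,z) = ∑ x, p(x,y) p(z|x)`. -/
noncomputable def IYZ (P : JointDist X Y) (e : Encoder X Z) : ℝ :=
  ∑ y, ∑ z, (∑ x, P.p x y * e.c x z) *
    Real.log ((∑ x, P.p x y * e.c x z) / (P.pY y * ∑ x, P.pX x * e.c x z))

/-- The Information Bottleneck objective `IB_β(X,Y;Z) = I(X;Z) − β·I(Y;Z)`. -/
noncomputable def IB (P : JointDist X Y) (β : ℝ) (e : Encoder X Z) : ℝ :=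
  IXZ P e - β * IYZ P e

/-- `(X,Y)` is `IB_β`-learnable if some representation `Z` (given by some encoder `p₁(z|x)`)
achieves `IB_β(X,Y;Z) < 0`, where `0` is the value attained by the trivial representation
`p(z|x) = p(z)`. -/
def IBLearnable (P : JointDist X Y) (β : ℝ) : Prop :=
  ∃ (n : ℕ) (e : Encoder X (Fin n)), IB P β e < 0

/-- The IB objective `I(X;Z) − β·I(Y;Z)` written as a formula of an arbitrary (not necessarily
normalized) encoder kernel `c : X → Z → ℝ`, with `p(z) = ∑ x, p(x) c(x,z)` and
`p(y,z) = ∑ x, p(x,y) c(x,z)`. -/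
noncomputable def IBraw (P : JointDist X Y) (β : ℝ) (c : X → Z → ℝ) : ℝ :=
  (∑ x, ∑ z, P.pX x * c x z *
      Real.log (P.pX x * c x z / (P.pX x * ∑ x', P.pX x' * c x' z)))
    - β * ∑ y, ∑ z, (∑ x, P.p x y * c x z) *
        Real.log ((∑ x, P.p x y * c x z) / (P.pY y * ∑ x, P.pX x * c x z))

/-- The first-order variation `δIB_β[p(z|x)]` of the IB objective at the encoder `c` for a
perturbation `h(z|x)`:
`δIB_β = ∑ p(x) h(z|x) log(p(z|x)/p(z)) − β ∑ p(x,y) h(z|x) log(p(z|y)/p(z))`. -/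
noncomputable def deltaIB (P : JointDist X Y) (β : ℝ) (c : X → Z → ℝ) (h : X → Z → ℝ) : ℝ :=
  (∑ x, ∑ z, P.pX x * h x z * Real.log (c x z / (∑ x', P.pX x' * c x' z)))
    - β * ∑ x, ∑ y, ∑ z, P.p x y * h x z *
        Real.log (((∑ x', P.p x' y * c x' z) / P.pY y) / (∑ x', P.pX x' * c x' z))

/-- The second-order variation `δ²IB_β[p(z|x)]` of the IB objective at the encoder `c` for a
perturbation `h(z|x)`:
`δ²IB_β = (1/2)[ ∑ p(x)²/p(x,z) h(z|x)² − β ∑ p(x,y)p(x',y)/p(y,z) h(z|x)h(z|x')`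
`+ (β−1) ∑ p(x)p(x')/p(z) h(z|x)h(z|x') ]`. -/
noncomputable def delta2IB (P : JointDist X Y) (β : ℝ) (c : X → Z → ℝ) (h : X → Z → ℝ) : ℝ :=
  (1 / 2) * ((∑ x, ∑ z, (P.pX x) ^ 2 / (P.pX x * c x z) * (h x z) ^ 2)
    - β * (∑ x, ∑ x', ∑ y, ∑ z,
        P.p x y * P.p x' y / (∑ x'', P.p x'' y * c x'' z) * (h x z * h x' z))
    + (β - 1) * (∑ x, ∑ x', ∑ z,
        P.pX x * P.pX x' / (∑ x'', P.pX x'' * c x'' z) * (h x z * h x' z)))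


lemma ev_pos_aux (a b : ℝ) (ha : 0 < a) : ∀ᶠ ε in 𝓝 (0:ℝ), 0 < a + ε * b := by
  have hb : (0:ℝ) < a / (|b| + 1) := by positivity
  filter_upwards [Metric.ball_mem_nhds (0:ℝ) hb] with ε hε
  rw [Metric.mem_ball, Real.dist_eq, sub_zero] at hε
  have h1 : |ε * b| ≤ |ε| * (|b| + 1) := by
    rw [abs_mul]; nlinarith [abs_nonneg ε, abs_nonneg b]
  have h2 : |ε| * (|b| + 1) < a := by
    exact (lt_div_iff₀ (show (0:ℝ) < |b| + 1 by positivity)).mp hε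
  nlinarith [neg_abs_le (ε * b)]

lemma log_one_add_est (t : ℝ) (ht : |t| ≤ 1 / 2) :
    |Real.log (1 + t) - (t - t ^ 2 / 2)| ≤ 2 * |t| ^ 3 := by
  have htlt : |t| < 1 := lt_of_le_of_lt ht (by norm_num)
  have hkey := Real.abs_log_sub_add_sum_range_le (x := -t) (by rwa [abs_neg]) 2
  have hsum : (∑ i ∈ Finset.range 2, (-t) ^ (i + 1) / ((i:ℝ) + 1)) = -t + t ^ 2 / 2 := by
    simp [Finset.sum_range_succ]; ring
  rw [hsum, abs_neg, sub_neg_eq_add] at hkey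
  have heq : Real.log (1 + t) - (t - t ^ 2 / 2) = -t + t ^ 2 / 2 + Real.log (1 + t) := by ring
  rw [heq]
  refine le_trans hkey ?_
  rw [div_le_iff₀ (by linarith [abs_nonneg t])]
  have h3 : |t| ^ (2 + 1) = |t| ^ 3 := rfl
  nlinarith [abs_nonneg t, pow_nonneg (abs_nonneg t) 3]

lemma logBigO (C D : ℝ) (hC : 0 < C) :
    (fun ε : ℝ => Real.log (C + ε * D)
        - (Real.log C + ε * (D / C) - ε ^ 2 * (D ^ 2 / (2 * C ^ 2))))
      =O[𝓝 (0:ℝ)] fun ε => ε ^ 3 := by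
  apply IsBigO.of_bound (2 * |D / C| ^ 3)
  have hsmall : ∀ᶠ ε in 𝓝 (0:ℝ), |ε * (D / C)| ≤ 1 / 2 := by
    have hcont : Tendsto (fun ε : ℝ => |ε * (D / C)|) (𝓝 0) (𝓝 |(0:ℝ) * (D / C)|) := by
      apply Continuous.tendsto; fun_prop
    simp only [zero_mul, abs_zero] at hcont
    exact hcont.eventually_le_const (by norm_num)
  filter_upwards [hsmall] with ε hε
  have hpos : 0 < 1 + ε * (D / C) := by
    have := neg_abs_le (ε * (D / C)); nlinarith [hε]
  have hCD : C + ε * D = C * (1 + ε * (D / C)) := by field_simp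
  have hlog : Real.log (C + ε * D) = Real.log C + Real.log (1 + ε * (D / C)) := by
    rw [hCD, Real.log_mul hC.ne' hpos.ne']
  have hq : Real.log (C + ε * D) - (Real.log C + ε * (D / C) - ε ^ 2 * (D ^ 2 / (2 * C ^ 2)))
      = Real.log (1 + ε * (D / C)) - (ε * (D / C) - (ε * (D / C)) ^ 2 / 2) := by
    rw [hlog]; field_simp; ring
  rw [Real.norm_eq_abs, Real.norm_eq_abs, hq]
  refine le_trans (log_one_add_est _ hε) ?_
  rw [abs_mul, mul_pow, abs_pow]
  ring_nf
  apply le_of_eq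
  ring

lemma blockBigO (A B C D : ℝ) (hC : 0 < C) :
    (fun ε : ℝ => (A + ε * B) * Real.log (C + ε * D)
        - (A * Real.log C + ε * (B * Real.log C + A * (D / C))
          + ε ^ 2 * (B * (D / C) - A * (D ^ 2 / (2 * C ^ 2)))))
      =O[𝓝 (0:ℝ)] fun ε => ε ^ 3 := by
  have h1 : (fun ε : ℝ => A + ε * B) =O[𝓝 (0:ℝ)] (fun _ => (1:ℝ)) := by
    apply Filter.Tendsto.isBigO_one
    have : Tendsto (fun ε : ℝ => A + ε * B) (𝓝 0) (𝓝 (A + 0 * B)) := by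
      apply Continuous.tendsto; fun_prop
    simpa using this
  have h2 := logBigO C D hC
  have h3 : (fun ε : ℝ => (A + ε * B) * (Real.log (C + ε * D)
      - (Real.log C + ε * (D / C) - ε ^ 2 * (D ^ 2 / (2 * C ^ 2)))))
      =O[𝓝 (0:ℝ)] (fun ε => ε ^ 3) := by simpa using h1.mul h2
  have h4 : (fun ε : ℝ => (-(B * (D ^ 2 / (2 * C ^ 2)))) * ε ^ 3) =O[𝓝 (0:ℝ)]
      (fun ε => ε ^ 3) := (isBigO_refl _ _).const_mul_left _
  have h5 := h3.add h4
  have heq : (fun ε : ℝ => (A + ε * B) * Real.log (C + ε * D)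
        - (A * Real.log C + ε * (B * Real.log C + A * (D / C))
          + ε ^ 2 * (B * (D / C) - A * (D ^ 2 / (2 * C ^ 2)))))
      = fun ε : ℝ => (A + ε * B) * (Real.log (C + ε * D)
          - (Real.log C + ε * (D / C) - ε ^ 2 * (D ^ 2 / (2 * C ^ 2))))
        + (-(B * (D ^ 2 / (2 * C ^ 2)))) * ε ^ 3 := by
    funext ε; ring
  rw [heq]
  simpa using h5

noncomputable def blk (A B C D eps : ℝ) : ℝ :=
  A * Real.log C + eps * (B * Real.log C + A * (D / C))
    + eps ^ 2 * (B * (D / C) - A * (D ^ 2 / (2 * C ^ 2)))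

lemma blkBigO (A B C D : ℝ) (hC : 0 < C) :
    (fun ε : ℝ => (A + ε * B) * Real.log (C + ε * D) - blk A B C D ε)
      =O[𝓝 (0:ℝ)] fun ε => ε ^ 3 := by
  simpa [blk] using blockBigO A B C D hC

lemma sum_poly2 {ι : Type*} (S : Finset ι) (a b c : ι → ℝ) (ε : ℝ) :
    ∑ i ∈ S, (a i + ε * b i + ε ^ 2 * c i)
      = (∑ i ∈ S, a i) + ε * (∑ i ∈ S, b i) + ε ^ 2 * (∑ i ∈ S, c i) := by
  simp [Finset.sum_add_distrib, Finset.mul_sum]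

set_option maxHeartbeats 2000000

/-- (First- and second-order variations of the IB objective.) For a perturbation
`h(z|x)` (with `∑ z, h(z|x) = 0`) of the encoder `p(z|x)`, the expansion
`IB_β[p(z|x) + ε·h(z|x)] = IB_β[p(z|x)] + ε·δIB_β + ε²·δ²IB_β + O(ε³)` holds as `ε → 0`,
where `δIB_β` and `δ²IB_β` are the explicit first- and second-order variation formulas above. -/
theorem IB_first_and_second_variation (P : JointDist X Y) (β : ℝ)
    (c : X → Z → ℝ) (hc : ∀ x z, 0 < c x z) (hc1 : ∀ x, ∑ z, c x z = 1)
    (hP : ∀ x y, 0 < P.p x y)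
    (h : X → Z → ℝ) (hh : ∀ x, ∑ z, h x z = 0) :
    (fun ε : ℝ =>
        IBraw P β (fun x z => c x z + ε * h x z)
          - (IBraw P β c + ε * deltaIB P β c h + ε ^ 2 * delta2IB P β c h))
      =O[nhds (0 : ℝ)] fun ε => ε ^ 3 := by
  have hYne : Nonempty Y := by
    by_contra h'
    rw [not_nonempty_iff] at h'
    have := P.sum_one
    simp [Finset.univ_eq_empty] at this
  have hXne : Nonempty X := by
    by_contra h'
    rw [not_nonempty_iff] at h'
    have := P.sum_one
    simp [Finset.univ_eq_empty] at this
  have hpX : ∀ x, 0 < P.pX x := fun x =>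
    Finset.sum_pos (fun y _ => hP x y) Finset.univ_nonempty
  have hpY : ∀ y, 0 < P.pY y := fun y =>
    Finset.sum_pos (fun x _ => hP x y) Finset.univ_nonempty
  have hq : ∀ z, 0 < ∑ x'', P.pX x'' * c x'' z := fun z =>
    Finset.sum_pos (fun x _ => mul_pos (hpX x) (hc x z)) Finset.univ_nonempty
  have hr : ∀ y z, 0 < ∑ x'', P.p x'' y * c x'' z := fun y z =>
    Finset.sum_pos (fun x _ => mul_pos (hP x y) (hc x z)) Finset.univ_nonempty
  -- linearity of the inner sums
  have haffq : ∀ (ε : ℝ) (z : Z), (∑ x'', P.pX x'' * (c x'' z + ε * h x'' z))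
      = ((∑ x'', P.pX x'' * c x'' z)) + ε * ((∑ x'', P.pX x'' * h x'' z)) := by
    intro ε z
    simp only [mul_add, Finset.sum_add_distrib, Finset.mul_sum]
    congr 1
    apply Finset.sum_congr rfl
    intro x _
    ring
  have haffr : ∀ (ε : ℝ) (y : Y) (z : Z), (∑ x'', P.p x'' y * (c x'' z + ε * h x'' z))
      = ((∑ x'', P.p x'' y * c x'' z)) + ε * ((∑ x'', P.p x'' y * h x'' z)) := by
    intro ε y z
    simp only [mul_add, Finset.sum_add_distrib, Finset.mul_sum]
    congr 1
    apply Finset.sum_congr rfl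
    intro x _
    ring
  -- the polynomial identity (coefficient matching)
  have hQ : ∀ ε : ℝ,
      (∑ x, ∑ z, (blk (P.pX x * c x z) (P.pX x * h x z) (c x z) (h x z) ε - blk (P.pX x * c x z) (P.pX x * h x z) (∑ x'', P.pX x'' * c x'' z) (∑ x'', P.pX x'' * h x'' z) ε))
        - β * ∑ y, ∑ z, (blk (∑ x'', P.p x'' y * c x'' z) (∑ x'', P.p x'' y * h x'' z) (∑ x'', P.p x'' y * c x'' z) (∑ x'', P.p x'' y * h x'' z) ε - blk (∑ x'', P.p x'' y * c x'' z) (∑ x'', P.p x'' y * h x'' z) (P.pY y) 0 ε - blk (∑ x'', P.p x'' y * c x'' z) (∑ x'', P.p x'' y * h x'' z) (∑ x'', P.pX x'' * c x'' z) (∑ x'', P.pX x'' * h x'' z) ε)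
      = IBraw P β c + ε * deltaIB P β c h + ε ^ 2 * delta2IB P β c h := by
    intro ε
    have e1 : ∀ x z, (blk (P.pX x * c x z) (P.pX x * h x z) (c x z) (h x z) ε - blk (P.pX x * c x z) (P.pX x * h x z) (∑ x'', P.pX x'' * c x'' z) (∑ x'', P.pX x'' * h x'' z) ε)
        = (P.pX x * c x z * Real.log (c x z) - P.pX x * c x z * Real.log (∑ x'', P.pX x'' * c x'' z)) + ε * ((P.pX x * h x z * Real.log (c x z) + P.pX x * c x z * (h x z / c x z)) - (P.pX x * h x z * Real.log (∑ x'', P.pX x'' * c x'' z) + P.pX x * c x z * ((∑ x'', P.pX x'' * h x'' z) / (∑ x'', P.pX x'' * c x'' z)))) + ε ^ 2 * ((P.pX x * h x z * (h x z / c x z) - P.pX x * c x z * ((h x z) ^ 2 / (2 * (c x z) ^ 2))) - (P.pX x * h x z * ((∑ x'', P.pX x'' * h x'' z) / (∑ x'', P.pX x'' * c x'' z)) - P.pX x * c x z * (((∑ x'', P.pX x'' * h x'' z)) ^ 2 / (2 * ((∑ x'', P.pX x'' * c x'' z)) ^ 2)))) := by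
      intro x z
      simp only [blk]
      ring
    have e2 : ∀ (y : Y) (z : Z), (blk (∑ x'', P.p x'' y * c x'' z) (∑ x'', P.p x'' y * h x'' z) (∑ x'', P.p x'' y * c x'' z) (∑ x'', P.p x'' y * h x'' z) ε - blk (∑ x'', P.p x'' y * c x'' z) (∑ x'', P.p x'' y * h x'' z) (P.pY y) 0 ε - blk (∑ x'', P.p x'' y * c x'' z) (∑ x'', P.p x'' y * h x'' z) (∑ x'', P.pX x'' * c x'' z) (∑ x'', P.pX x'' * h x'' z) ε)
        = (((∑ x'', P.p x'' y * c x'' z)) * Real.log ((∑ x'', P.p x'' y * c x'' z)) - ((∑ x'', P.p x'' y * c x'' z)) * Real.log (P.pY y) - ((∑ x'', P.p x'' y * c x'' z)) * Real.log ((∑ x'', P.pX x'' * c x'' z))) + ε * ((((∑ x'', P.p x'' y * h x'' z)) * Real.log ((∑ x'', P.p x'' y * c x'' z)) + ((∑ x'', P.p x'' y * c x'' z)) * (((∑ x'', P.p x'' y * h x'' z)) / ((∑ x'', P.p x'' y * c x'' z)))) - ((∑ x'', P.p x'' y * h x'' z)) * Real.log (P.pY y) - (((∑ x'', P.p x'' y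 * h x'' z)) * Real.log ((∑ x'', P.pX x'' * c x'' z)) + ((∑ x'', P.p x'' y * c x'' z)) * ((∑ x'', P.pX x'' * h x'' z) / (∑ x'', P.pX x'' * c x'' z)))) + ε ^ 2 * ((((∑ x'', P.p x'' y * h x'' z)) * (((∑ x'', P.p x'' y * h x'' z)) / ((∑ x'', P.p x'' y * c x'' z))) - ((∑ x'', P.p x'' y * c x'' z)) * (((∑ x'', P.p x'' y * h x'' z)) ^ 2 / (2 * ((∑ x'', P.p x'' y * c x'' z)) ^ 2))) - (((∑ x'', P.p x'' y * h x'' z)) * ((∑ x'', P.pX x'' * h x'' z) / (∑ x'', P.pX x'' * c x'' z)) - ((∑ x'', P.p x'' y * c x'' z)) * (((∑ x'', P.pX x'' * h x'' z)) ^ 2 / (2 * ((∑ x'', P.pX x'' * c x'' z)) ^ 2)))) := by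
      intro y z
      simp only [blk]
      ring
    have E0 : (∑ x, ∑ z, (P.pX x * c x z * Real.log (c x z) - P.pX x * c x z * Real.log (∑ x'', P.pX x'' * c x'' z))) - β * ∑ y, ∑ z, (((∑ x'', P.p x'' y * c x'' z)) * Real.log ((∑ x'', P.p x'' y * c x'' z)) - ((∑ x'', P.p x'' y * c x'' z)) * Real.log (P.pY y) - ((∑ x'', P.p x'' y * c x'' z)) * Real.log ((∑ x'', P.pX x'' * c x'' z))) = IBraw P β c := by
      unfold IBraw
      congr 1
      · apply Finset.sum_congr rfl; intro x _
        apply Finset.sum_congr rfl; intro z _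
        rw [mul_div_mul_left _ _ (ne_of_gt (hpX x)),
          Real.log_div (ne_of_gt (hc x z)) (ne_of_gt (hq z))]
        ring
      · congr 1
        apply Finset.sum_congr rfl; intro y _
        apply Finset.sum_congr rfl; intro z _
        rw [Real.log_div (ne_of_gt (hr y z)) (ne_of_gt (mul_pos (hpY y) (hq z))),
          Real.log_mul (ne_of_gt (hpY y)) (ne_of_gt (hq z))]
        ring
    have Hq_y : ∀ z : Z, ∑ y, (∑ x'', P.p x'' y * c x'' z) = ∑ x'', P.pX x'' * c x'' z := by
      intro z
      rw [Finset.sum_comm]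
      apply Finset.sum_congr rfl; intro x _
      rw [← Finset.sum_mul]
      rfl
    have Hk_y : ∀ z : Z, ∑ y, (∑ x'', P.p x'' y * h x'' z) = ∑ x'', P.pX x'' * h x'' z := by
      intro z
      rw [Finset.sum_comm]
      apply Finset.sum_congr rfl; intro x _
      rw [← Finset.sum_mul]
      rfl
    have Z1 : ∑ x, ∑ z, P.pX x * h x z = 0 := by
      apply Finset.sum_eq_zero; intro x _
      rw [← Finset.mul_sum, hh x, mul_zero]
    have Hkz : ∑ z, (∑ x'', P.pX x'' * h x'' z) = 0 := by
      rw [Finset.sum_comm]; exact Z1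
    have E1 : (∑ x, ∑ z, ((P.pX x * h x z * Real.log (c x z) + P.pX x * c x z * (h x z / c x z)) - (P.pX x * h x z * Real.log (∑ x'', P.pX x'' * c x'' z) + P.pX x * c x z * ((∑ x'', P.pX x'' * h x'' z) / (∑ x'', P.pX x'' * c x'' z))))) - β * ∑ y, ∑ z, ((((∑ x'', P.p x'' y * h x'' z)) * Real.log ((∑ x'', P.p x'' y * c x'' z)) + ((∑ x'', P.p x'' y * c x'' z)) * (((∑ x'', P.p x'' y * h x'' z)) / ((∑ x'', P.p x'' y * c x'' z)))) - ((∑ x'', P.p x'' y * h x'' z)) * Real.log (P.pY y) - (((∑ x'', P.p x'' y * h x'' z)) * Real.log ((∑ x'', P.pX x'' * c x'' z)) + ((∑ x'', P.p x'' y * c x'' z)) * ((∑ x'', P.pX x'' * h x'' z) / (∑ x'', P.pX x'' * c x'' z)))) = deltaIB P β c h := by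
      have hb1 : ∀ (x : X) (z : Z), ((P.pX x * h x z * Real.log (c x z) + P.pX x * c x z * (h x z / c x z)) - (P.pX x * h x z * Real.log (∑ x'', P.pX x'' * c x'' z) + P.pX x * c x z * ((∑ x'', P.pX x'' * h x'' z) / (∑ x'', P.pX x'' * c x'' z))))
          = P.pX x * h x z * Real.log (c x z / ((∑ x'', P.pX x'' * c x'' z)))
            + P.pX x * h x z - P.pX x * c x z * (((∑ x'', P.pX x'' * h x'' z)) / ((∑ x'', P.pX x'' * c x'' z))) := by
        intro x z
        rw [Real.log_div (ne_of_gt (hc x z)) (ne_of_gt (hq z))]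
        have hcc : P.pX x * c x z * (h x z / c x z) = P.pX x * h x z := by
          field_simp [(hc x z).ne']
        linear_combination hcc
      have hb2 : ∀ (y : Y) (z : Z), ((((∑ x'', P.p x'' y * h x'' z)) * Real.log ((∑ x'', P.p x'' y * c x'' z)) + ((∑ x'', P.p x'' y * c x'' z)) * (((∑ x'', P.p x'' y * h x'' z)) / ((∑ x'', P.p x'' y * c x'' z)))) - ((∑ x'', P.p x'' y * h x'' z)) * Real.log (P.pY y) - (((∑ x'', P.p x'' y * h x'' z)) * Real.log ((∑ x'', P.pX x'' * c x'' z)) + ((∑ x'', P.p x'' y * c x'' z)) * ((∑ x'', P.pX x'' * h x'' z) / (∑ x'', P.pX x'' * c x'' z))))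
          = ((∑ x'', P.p x'' y * h x'' z)) * Real.log ((((∑ x'', P.p x'' y * c x'' z)) / P.pY y) / ((∑ x'', P.pX x'' * c x'' z)))
            + ((∑ x'', P.p x'' y * h x'' z)) - ((∑ x'', P.p x'' y * c x'' z)) * (((∑ x'', P.pX x'' * h x'' z)) / ((∑ x'', P.pX x'' * c x'' z))) := by
        intro y z
        rw [Real.log_div (ne_of_gt (div_pos (hr y z) (hpY y))) (ne_of_gt (hq z)),
          Real.log_div (ne_of_gt (hr y z)) (ne_of_gt (hpY y))]
        have hss : ((∑ x'', P.p x'' y * c x'' z)) * (((∑ x'', P.p x'' y * h x'' z)) / ((∑ x'', P.p x'' y * c x'' z))) = ((∑ x'', P.p x'' y * h x'' z)) := by field_simp [(hr y z).ne']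
        linear_combination hss
      rw [Finset.sum_congr rfl fun x _ => Finset.sum_congr rfl fun z _ => hb1 x z,
        Finset.sum_congr rfl fun y _ => Finset.sum_congr rfl fun z _ => hb2 y z]
      simp only [Finset.sum_add_distrib, Finset.sum_sub_distrib]
      have Z2 : ∑ x, ∑ z, P.pX x * c x z * (((∑ x'', P.pX x'' * h x'' z)) / ((∑ x'', P.pX x'' * c x'' z))) = 0 := by
        rw [Finset.sum_comm]
        rw [Finset.sum_congr rfl fun z _ => ?_]
        · exact Hkz
        · rw [← Finset.sum_mul, mul_comm, div_mul_cancel₀ _ (ne_of_gt (hq z))]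
      have Z3 : ∑ y, ∑ z, ((∑ x'', P.p x'' y * h x'' z)) = 0 := by
        rw [Finset.sum_comm]
        rw [Finset.sum_congr rfl fun z _ => Hk_y z]
        exact Hkz
      have Z4 : ∑ y, ∑ z, ((∑ x'', P.p x'' y * c x'' z)) * (((∑ x'', P.pX x'' * h x'' z)) / ((∑ x'', P.pX x'' * c x'' z))) = 0 := by
        rw [Finset.sum_comm]
        rw [Finset.sum_congr rfl fun z _ => ?_]
        · exact Hkz
        · rw [← Finset.sum_mul, Hq_y z, mul_comm, div_mul_cancel₀ _ (ne_of_gt (hq z))]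
      have Hlog : ∑ y, ∑ z, ((∑ x'', P.p x'' y * h x'' z)) * Real.log ((((∑ x'', P.p x'' y * c x'' z)) / P.pY y) / ((∑ x'', P.pX x'' * c x'' z)))
          = ∑ x, ∑ y, ∑ z, P.p x y * h x z
              * Real.log ((((∑ x'', P.p x'' y * c x'' z)) / P.pY y) / ((∑ x'', P.pX x'' * c x'' z))) := by
        rw [Finset.sum_congr rfl fun y _ => Finset.sum_congr rfl fun z _ =>
          Finset.sum_mul Finset.univ (fun x'' => P.p x'' y * h x'' z) _]
        rw [Finset.sum_congr rfl fun y _ => Finset.sum_comm]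
        rw [Finset.sum_comm]
      rw [Z1, Z2, Z3, Z4, Hlog]
      unfold deltaIB
      ring
    have E2 : (∑ x, ∑ z, ((P.pX x * h x z * (h x z / c x z) - P.pX x * c x z * ((h x z) ^ 2 / (2 * (c x z) ^ 2))) - (P.pX x * h x z * ((∑ x'', P.pX x'' * h x'' z) / (∑ x'', P.pX x'' * c x'' z)) - P.pX x * c x z * (((∑ x'', P.pX x'' * h x'' z)) ^ 2 / (2 * ((∑ x'', P.pX x'' * c x'' z)) ^ 2))))) - β * ∑ y, ∑ z, ((((∑ x'', P.p x'' y * h x'' z)) * (((∑ x'', P.p x'' y * h x'' z)) / ((∑ x'', P.p x'' y * c x'' z))) - ((∑ x'', P.p x'' y * c x'' z)) * (((∑ x'', P.p x'' y * h x'' z)) ^ 2 / (2 * ((∑ x'', P.p x'' y * c x'' z)) ^ 2))) - (((∑ x'', P.p x'' y * h x'' z)) * ((∑ x'', P.pX x'' * h x'' z) / (∑ x'', P.pX x'' * c x'' z)) - ((∑ x'', P.p x'' y * c x'' z)) * (((∑ x'', P.pX x'' * h x'' z)) ^ 2 / (2 * ((∑ x'', P.pX x'' * c x'' z)) ^ 2))))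 = delta2IB P β c h := by
      have hc1' : ∀ (x : X) (z : Z), ((P.pX x * h x z * (h x z / c x z) - P.pX x * c x z * ((h x z) ^ 2 / (2 * (c x z) ^ 2))) - (P.pX x * h x z * ((∑ x'', P.pX x'' * h x'' z) / (∑ x'', P.pX x'' * c x'' z)) - P.pX x * c x z * (((∑ x'', P.pX x'' * h x'' z)) ^ 2 / (2 * ((∑ x'', P.pX x'' * c x'' z)) ^ 2))))
          = (1/2) * ((P.pX x) ^ 2 / (P.pX x * c x z) * (h x z) ^ 2)
            - P.pX x * h x z * (((∑ x'', P.pX x'' * h x'' z)) / ((∑ x'', P.pX x'' * c x'' z)))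
            + P.pX x * c x z * (((∑ x'', P.pX x'' * h x'' z)) ^ 2 / (2 * ((∑ x'', P.pX x'' * c x'' z)) ^ 2)) := by
        intro x z
        have h1 : P.pX x * h x z * (h x z / c x z)
            - P.pX x * c x z * ((h x z) ^ 2 / (2 * (c x z) ^ 2))
            = (1/2) * ((P.pX x) ^ 2 / (P.pX x * c x z) * (h x z) ^ 2) := by
          field_simp [(hc x z).ne', (hpX x).ne']
          ring
        linear_combination h1
      have hc2' : ∀ (y : Y) (z : Z), ((((∑ x'', P.p x'' y * h x'' z)) * (((∑ x'', P.p x'' y * h x'' z)) / ((∑ x'', P.p x'' y * c x'' z))) - ((∑ x'', P.p x'' y * c x'' z)) * (((∑ x'', P.p x'' y * h x'' z)) ^ 2 / (2 * ((∑ x'', P.p x'' y * c x'' z)) ^ 2))) - (((∑ x'', P.p x'' y * h x'' z)) * ((∑ x'', P.pX x'' * h x'' z) / (∑ x'', P.pX x'' * c x'' z)) - ((∑ x'', P.p x'' y * c x'' z)) * (((∑ x'', P.pX x'' * h x'' z)) ^ 2 / (2 * ((∑ x'', P.pX x'' * c x'' z)) ^ 2))))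
          = (1/2) * (((∑ x'', P.p x'' y * h x'' z)) ^ 2 / ((∑ x'', P.p x'' y * c x'' z)))
            - ((∑ x'', P.p x'' y * h x'' z)) * (((∑ x'', P.pX x'' * h x'' z)) / ((∑ x'', P.pX x'' * c x'' z)))
            + ((∑ x'', P.p x'' y * c x'' z)) * (((∑ x'', P.pX x'' * h x'' z)) ^ 2 / (2 * ((∑ x'', P.pX x'' * c x'' z)) ^ 2)) := by
        intro y z
        have h1 : ((∑ x'', P.p x'' y * h x'' z)) * (((∑ x'', P.p x'' y * h x'' z)) / ((∑ x'', P.p x'' y * c x'' z))) - ((∑ x'', P.p x'' y * c x'' z)) * (((∑ x'', P.p x'' y * h x'' z)) ^ 2 / (2 * ((∑ x'', P.p x'' y * c x'' z)) ^ 2))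
            = (1/2) * (((∑ x'', P.p x'' y * h x'' z)) ^ 2 / ((∑ x'', P.p x'' y * c x'' z))) := by
          field_simp [(hr y z).ne']
          ring
        linear_combination h1
      rw [Finset.sum_congr rfl fun x _ => Finset.sum_congr rfl fun z _ => hc1' x z,
        Finset.sum_congr rfl fun y _ => Finset.sum_congr rfl fun z _ => hc2' y z]
      simp only [Finset.sum_add_distrib, Finset.sum_sub_distrib]
      have W1 : ∑ x, ∑ z, P.pX x * h x z * (((∑ x'', P.pX x'' * h x'' z)) / ((∑ x'', P.pX x'' * c x'' z))) = ∑ z, ((∑ x'', P.pX x'' * h x'' z)) ^ 2 / ((∑ x'', P.pX x'' * c x'' z)) := by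
        rw [Finset.sum_comm]
        apply Finset.sum_congr rfl; intro z _
        rw [← Finset.sum_mul]
        ring
      have W2 : ∑ x, ∑ z, P.pX x * c x z * (((∑ x'', P.pX x'' * h x'' z)) ^ 2 / (2 * ((∑ x'', P.pX x'' * c x'' z)) ^ 2))
          = (1/2) * ∑ z, ((∑ x'', P.pX x'' * h x'' z)) ^ 2 / ((∑ x'', P.pX x'' * c x'' z)) := by
        rw [Finset.mul_sum, Finset.sum_comm]
        apply Finset.sum_congr rfl; intro z _
        rw [← Finset.sum_mul]
        field_simp [(hq z).ne']
      have W3 : ∑ y, ∑ z, ((∑ x'', P.p x'' y * h x'' z)) * (((∑ x'', P.pX x'' * h x'' z)) / ((∑ x'', P.pX x'' * c x'' z))) = ∑ z, ((∑ x'', P.pX x'' * h x'' z)) ^ 2 / ((∑ x'', P.pX x'' * c x'' z)) := by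
        rw [Finset.sum_comm]
        apply Finset.sum_congr rfl; intro z _
        rw [← Finset.sum_mul, Hk_y z]
        ring
      have W4 : ∑ y, ∑ z, ((∑ x'', P.p x'' y * c x'' z)) * (((∑ x'', P.pX x'' * h x'' z)) ^ 2 / (2 * ((∑ x'', P.pX x'' * c x'' z)) ^ 2))
          = (1/2) * ∑ z, ((∑ x'', P.pX x'' * h x'' z)) ^ 2 / ((∑ x'', P.pX x'' * c x'' z)) := by
        rw [Finset.mul_sum, Finset.sum_comm]
        apply Finset.sum_congr rfl; intro z _
        rw [← Finset.sum_mul, Hq_y z]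
        field_simp [(hq z).ne']
      have H1 : ∑ x, ∑ z, (1/2) * ((P.pX x) ^ 2 / (P.pX x * c x z) * (h x z) ^ 2)
          = (1/2) * ∑ x, ∑ z, (P.pX x) ^ 2 / (P.pX x * c x z) * (h x z) ^ 2 := by
        rw [Finset.mul_sum]
        apply Finset.sum_congr rfl; intro x _
        rw [Finset.mul_sum]
      have H2 : ∑ y, ∑ z, (1/2) * (((∑ x'', P.p x'' y * h x'' z)) ^ 2 / ((∑ x'', P.p x'' y * c x'' z)))
          = (1/2) * ∑ y, ∑ z, ((∑ x'', P.p x'' y * h x'' z)) ^ 2 / ((∑ x'', P.p x'' y * c x'' z)) := by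
        rw [Finset.mul_sum]
        apply Finset.sum_congr rfl; intro y _
        rw [Finset.mul_sum]
      have V4 : ∑ x, ∑ x', ∑ y, ∑ z, P.p x y * P.p x' y / ((∑ x'', P.p x'' y * c x'' z)) * (h x z * h x' z)
          = ∑ y, ∑ z, ((∑ x'', P.p x'' y * h x'' z)) ^ 2 / ((∑ x'', P.p x'' y * c x'' z)) := by
        calc ∑ x, ∑ x', ∑ y, ∑ z, P.p x y * P.p x' y / ((∑ x'', P.p x'' y * c x'' z)) * (h x z * h x' z)
            = ∑ x, ∑ y, ∑ z, ∑ x', P.p x y * P.p x' y / ((∑ x'', P.p x'' y * c x'' z)) * (h x z * h x' z) := by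
              apply Finset.sum_congr rfl; intro x _
              rw [Finset.sum_comm]
              apply Finset.sum_congr rfl; intro y _
              rw [Finset.sum_comm]
          _ = ∑ y, ∑ x, ∑ z, ∑ x', P.p x y * P.p x' y / ((∑ x'', P.p x'' y * c x'' z)) * (h x z * h x' z) :=
              Finset.sum_comm
          _ = ∑ y, ∑ z, ∑ x, ∑ x', P.p x y * P.p x' y / ((∑ x'', P.p x'' y * c x'' z)) * (h x z * h x' z) := by
              apply Finset.sum_congr rfl; intro y _
              rw [Finset.sum_comm]
          _ = ∑ y, ∑ z, ((∑ x'', P.p x'' y * h x'' z)) ^ 2 / ((∑ x'', P.p x'' y * c x'' z)) := by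
              apply Finset.sum_congr rfl; intro y _
              apply Finset.sum_congr rfl; intro z _
              rw [sq, Finset.sum_mul_sum, Finset.sum_div]
              apply Finset.sum_congr rfl; intro x _
              rw [Finset.sum_div]
              apply Finset.sum_congr rfl; intro x' _
              ring
      have V3 : ∑ x, ∑ x', ∑ z, P.pX x * P.pX x' / ((∑ x'', P.pX x'' * c x'' z)) * (h x z * h x' z)
          = ∑ z, ((∑ x'', P.pX x'' * h x'' z)) ^ 2 / ((∑ x'', P.pX x'' * c x'' z)) := by
        calc ∑ x, ∑ x', ∑ z, P.pX x * P.pX x' / ((∑ x'', P.pX x'' * c x'' z)) * (h x z * h x' z)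
            = ∑ x, ∑ z, ∑ x', P.pX x * P.pX x' / ((∑ x'', P.pX x'' * c x'' z)) * (h x z * h x' z) := by
              apply Finset.sum_congr rfl; intro x _
              rw [Finset.sum_comm]
          _ = ∑ z, ∑ x, ∑ x', P.pX x * P.pX x' / ((∑ x'', P.pX x'' * c x'' z)) * (h x z * h x' z) :=
              Finset.sum_comm
          _ = ∑ z, ((∑ x'', P.pX x'' * h x'' z)) ^ 2 / ((∑ x'', P.pX x'' * c x'' z)) := by
              apply Finset.sum_congr rfl; intro z _
              rw [sq, Finset.sum_mul_sum, Finset.sum_div]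
              apply Finset.sum_congr rfl; intro x _
              rw [Finset.sum_div]
              apply Finset.sum_congr rfl; intro x' _
              ring
      rw [W1, W2, W3, W4, H1, H2]
      unfold delta2IB
      rw [V4, V3]
      ring
    calc (∑ x, ∑ z, (blk (P.pX x * c x z) (P.pX x * h x z) (c x z) (h x z) ε - blk (P.pX x * c x z) (P.pX x * h x z) (∑ x'', P.pX x'' * c x'' z) (∑ x'', P.pX x'' * h x'' z) ε))
        - β * ∑ y, ∑ z, (blk (∑ x'', P.p x'' y * c x'' z) (∑ x'', P.p x'' y * h x'' z) (∑ x'', P.p x'' y * c x'' z) (∑ x'', P.p x'' y * h x'' z) ε - blk (∑ x'', P.p x'' y * c x'' z) (∑ x'', P.p x'' y * h x'' z) (P.pY y) 0 ε - blk (∑ x'', P.p x'' y * c x'' z) (∑ x'', P.p x'' y * h x'' z) (∑ x'', P.pX x'' * c x'' z) (∑ x'', P.pX x'' * h x'' z) ε)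
        = (∑ x, ∑ z, ((P.pX x * c x z * Real.log (c x z) - P.pX x * c x z * Real.log (∑ x'', P.pX x'' * c x'' z)) + ε * ((P.pX x * h x z * Real.log (c x z) + P.pX x * c x z * (h x z / c x z)) - (P.pX x * h x z * Real.log (∑ x'', P.pX x'' * c x'' z) + P.pX x * c x z * ((∑ x'', P.pX x'' * h x'' z) / (∑ x'', P.pX x'' * c x'' z)))) + ε ^ 2 * ((P.pX x * h x z * (h x z / c x z) - P.pX x * c x z * ((h x z) ^ 2 / (2 * (c x z) ^ 2))) - (P.pX x * h x z * ((∑ x'', P.pX x'' * h x'' z) / (∑ x'', P.pX x'' * c x'' z)) - P.pX x * c x z * (((∑ x'', P.pX x'' * h x'' z)) ^ 2 / (2 * ((∑ x'', P.pX x'' * c x'' z)) ^ 2))))))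
          - β * ∑ y, ∑ z, ((((∑ x'', P.p x'' y * c x'' z)) * Real.log ((∑ x'', P.p x'' y * c x'' z)) - ((∑ x'', P.p x'' y * c x'' z)) * Real.log (P.pY y) - ((∑ x'', P.p x'' y * c x'' z)) * Real.log ((∑ x'', P.pX x'' * c x'' z))) + ε * ((((∑ x'', P.p x'' y * h x'' z)) * Real.log ((∑ x'', P.p x'' y * c x'' z)) + ((∑ x'', P.p x'' y * c x'' z)) * (((∑ x'', P.p x'' y * h x'' z)) / ((∑ x'', P.p x'' y * c x'' z)))) - ((∑ x'', P.p x'' y * h x'' z)) * Real.log (P.pY y) - (((∑ x'', P.p x'' y * h x'' z)) * Real.log ((∑ x'', P.pX x'' * c x'' z)) + ((∑ x'', P.p x'' y * c x'' z)) * ((∑ x'', P.pX x'' * h x'' z) / (∑ x'', P.pX x'' * c x'' z)))) + ε ^ 2 * ((((∑ x'', P.p x'' y * h x'' z)) * (((∑ x'', P.p x'' y * h x'' z)) / ((∑ x'', P.p x'' y * c x'' z))) - ((∑ x'', P.p x'' y * c x'' z)) * (((∑ x'', P.p x'' y * h x'' z)) ^ 2 / (2 * ((∑ x'', P.p x'' y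 * c x'' z)) ^ 2))) - (((∑ x'', P.p x'' y * h x'' z)) * ((∑ x'', P.pX x'' * h x'' z) / (∑ x'', P.pX x'' * c x'' z)) - ((∑ x'', P.p x'' y * c x'' z)) * (((∑ x'', P.pX x'' * h x'' z)) ^ 2 / (2 * ((∑ x'', P.pX x'' * c x'' z)) ^ 2))))) := by
          rw [Finset.sum_congr rfl fun x _ => Finset.sum_congr rfl fun z _ => e1 x z,
            Finset.sum_congr rfl fun y _ => Finset.sum_congr rfl fun z _ => e2 y z]
      _ = ((∑ x, ∑ z, (P.pX x * c x z * Real.log (c x z) - P.pX x * c x z * Real.log (∑ x'', P.pX x'' * c x'' z))) + ε * (∑ x, ∑ z, ((P.pX x * h x z * Real.log (c x z) + P.pX x * c x z * (h x z / c x z)) - (P.pX x * h x z * Real.log (∑ x'', P.pX x'' * c x'' z) + P.pX x * c x z * ((∑ x'', P.pX x'' * h x'' z) / (∑ x'', P.pX x'' * c x'' z))))) + ε ^ 2 * (∑ x, ∑ z, ((P.pX x * h x z * (h x z / c x z) - P.pX x * c x z * ((h x z) ^ 2 / (2 * (c x z) ^ 2))) - (P.pX x * h x z * ((∑ x'', P.pX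 x'' * h x'' z) / (∑ x'', P.pX x'' * c x'' z)) - P.pX x * c x z * (((∑ x'', P.pX x'' * h x'' z)) ^ 2 / (2 * ((∑ x'', P.pX x'' * c x'' z)) ^ 2))))))
          - β * ((∑ y, ∑ z, (((∑ x'', P.p x'' y * c x'' z)) * Real.log ((∑ x'', P.p x'' y * c x'' z)) - ((∑ x'', P.p x'' y * c x'' z)) * Real.log (P.pY y) - ((∑ x'', P.p x'' y * c x'' z)) * Real.log ((∑ x'', P.pX x'' * c x'' z)))) + ε * (∑ y, ∑ z, ((((∑ x'', P.p x'' y * h x'' z)) * Real.log ((∑ x'', P.p x'' y * c x'' z)) + ((∑ x'', P.p x'' y * c x'' z)) * (((∑ x'', P.p x'' y * h x'' z)) / ((∑ x'', P.p x'' y * c x'' z)))) - ((∑ x'', P.p x'' y * h x'' z)) * Real.log (P.pY y) - (((∑ x'', P.p x'' y * h x'' z)) * Real.log ((∑ x'', P.pX x'' * c x'' z)) + ((∑ x'', P.p x'' y * c x'' z)) * ((∑ x'', P.pX x'' * h x'' z) / (∑ x'', P.pX x'' * c x'' z))))) + ε ^ 2 * (∑ y, ∑ z, ((((∑ x'', P.p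 x'' y * h x'' z)) * (((∑ x'', P.p x'' y * h x'' z)) / ((∑ x'', P.p x'' y * c x'' z))) - ((∑ x'', P.p x'' y * c x'' z)) * (((∑ x'', P.p x'' y * h x'' z)) ^ 2 / (2 * ((∑ x'', P.p x'' y * c x'' z)) ^ 2))) - (((∑ x'', P.p x'' y * h x'' z)) * ((∑ x'', P.pX x'' * h x'' z) / (∑ x'', P.pX x'' * c x'' z)) - ((∑ x'', P.p x'' y * c x'' z)) * (((∑ x'', P.pX x'' * h x'' z)) ^ 2 / (2 * ((∑ x'', P.pX x'' * c x'' z)) ^ 2)))))) := by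
          rw [Finset.sum_congr rfl fun x _ => sum_poly2 Finset.univ _ _ _ ε,
            Finset.sum_congr rfl fun y _ => sum_poly2 Finset.univ _ _ _ ε,
            sum_poly2 Finset.univ _ _ _ ε, sum_poly2 Finset.univ _ _ _ ε]
      _ = IBraw P β c + ε * deltaIB P β c h + ε ^ 2 * delta2IB P β c h := by
          rw [← E0, ← E1, ← E2]; ring
  -- eventual equality with the sum of block remainders
  have hmain : ∀ᶠ ε in 𝓝 (0:ℝ),
      IBraw P β (fun x z => c x z + ε * h x z)
          - (IBraw P β c + ε * deltaIB P β c h + ε ^ 2 * delta2IB P β c h)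
      = (∑ x, ∑ z, (((P.pX x * c x z + ε * (P.pX x * h x z)) * Real.log (c x z + ε * h x z) - blk (P.pX x * c x z) (P.pX x * h x z) (c x z) (h x z) ε) - ((P.pX x * c x z + ε * (P.pX x * h x z)) * Real.log ((∑ x'', P.pX x'' * c x'' z) + ε * (∑ x'', P.pX x'' * h x'' z)) - blk (P.pX x * c x z) (P.pX x * h x z) (∑ x'', P.pX x'' * c x'' z) (∑ x'', P.pX x'' * h x'' z) ε)))
        - β * ∑ y, ∑ z, (((((∑ x'', P.p x'' y * c x'' z)) + ε * ((∑ x'', P.p x'' y * h x'' z))) * Real.log (((∑ x'', P.p x'' y * c x'' z)) + ε * ((∑ x'', P.p x'' y * h x'' z))) - blk (∑ x'', P.p x'' y * c x'' z) (∑ x'', P.p x'' y * h x'' z) (∑ x'', P.p x'' y * c x'' z) (∑ x'', P.p x'' y * h x'' z) ε) - ((((∑ x'', P.p x'' y * c x'' z)) + ε * ((∑ x'', P.p x'' y * h x'' z))) * Real.log (P.pY y) - blk (∑ x'', P.p x'' y * c x'' z) (∑ x'', P.p x'' y * h x'' z) (P.pY y) 0 ε) - ((((∑ x'', P.p x'' y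 * c x'' z)) + ε * ((∑ x'', P.p x'' y * h x'' z))) * Real.log (((∑ x'', P.pX x'' * c x'' z)) + ε * ((∑ x'', P.pX x'' * h x'' z))) - blk (∑ x'', P.p x'' y * c x'' z) (∑ x'', P.p x'' y * h x'' z) (∑ x'', P.pX x'' * c x'' z) (∑ x'', P.pX x'' * h x'' z) ε)) := by
    have evc : ∀ᶠ ε in 𝓝 (0:ℝ), ∀ (x : X) (z : Z), 0 < c x z + ε * h x z :=
      Filter.eventually_all.2 fun x => Filter.eventually_all.2 fun z =>
        ev_pos_aux _ _ (hc x z)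
    have evq : ∀ᶠ ε in 𝓝 (0:ℝ), ∀ z : Z, 0 < ((∑ x'', P.pX x'' * c x'' z)) + ε * ((∑ x'', P.pX x'' * h x'' z)) :=
      Filter.eventually_all.2 fun z => ev_pos_aux _ _ (hq z)
    have evr : ∀ᶠ ε in 𝓝 (0:ℝ), ∀ (y : Y) (z : Z), 0 < ((∑ x'', P.p x'' y * c x'' z)) + ε * ((∑ x'', P.p x'' y * h x'' z)) :=
      Filter.eventually_all.2 fun y => Filter.eventually_all.2 fun z =>
        ev_pos_aux _ _ (hr y z)
    filter_upwards [evc, evq, evr] with ε hevc hevq hevr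
    have hA : IBraw P β (fun x z => c x z + ε * h x z)
        = (∑ x, ∑ z, ((P.pX x * c x z + ε * (P.pX x * h x z)) * Real.log (c x z + ε * h x z) - (P.pX x * c x z + ε * (P.pX x * h x z)) * Real.log ((∑ x'', P.pX x'' * c x'' z) + ε * (∑ x'', P.pX x'' * h x'' z))))
          - β * ∑ y, ∑ z, ((((∑ x'', P.p x'' y * c x'' z)) + ε * ((∑ x'', P.p x'' y * h x'' z))) * Real.log (((∑ x'', P.p x'' y * c x'' z)) + ε * ((∑ x'', P.p x'' y * h x'' z))) - (((∑ x'', P.p x'' y * c x'' z)) + ε * ((∑ x'', P.p x'' y * h x'' z))) * Real.log (P.pY y) - (((∑ x'', P.p x'' y * c x'' z)) + ε * ((∑ x'', P.p x'' y * h x'' z))) * Real.log (((∑ x'', P.pX x'' * c x'' z)) + ε * ((∑ x'', P.pX x'' * h x'' z)))) := by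
      unfold IBraw
      congr 1
      · apply Finset.sum_congr rfl
        intro x _
        apply Finset.sum_congr rfl
        intro z _
        rw [haffq ε z]
        rw [mul_div_mul_left _ _ (ne_of_gt (hpX x))]
        rw [Real.log_div (ne_of_gt (hevc x z)) (ne_of_gt (hevq z))]
        ring
      · congr 1
        apply Finset.sum_congr rfl
        intro y _
        apply Finset.sum_congr rfl
        intro z _
        rw [haffr ε y z, haffq ε z]
        rw [Real.log_div (ne_of_gt (hevr y z)) (ne_of_gt (mul_pos (hpY y) (hevq z)))]
        rw [Real.log_mul (ne_of_gt (hpY y)) (ne_of_gt (hevq z))]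
        ring
    rw [hA, ← hQ ε]
    simp only [Finset.sum_sub_distrib]
    ring
  -- the sum of block remainders is O(ε³)
  have hO : (fun ε : ℝ =>
      (∑ x, ∑ z, (((P.pX x * c x z + ε * (P.pX x * h x z)) * Real.log (c x z + ε * h x z) - blk (P.pX x * c x z) (P.pX x * h x z) (c x z) (h x z) ε) - ((P.pX x * c x z + ε * (P.pX x * h x z)) * Real.log ((∑ x'', P.pX x'' * c x'' z) + ε * (∑ x'', P.pX x'' * h x'' z)) - blk (P.pX x * c x z) (P.pX x * h x z) (∑ x'', P.pX x'' * c x'' z) (∑ x'', P.pX x'' * h x'' z) ε)))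
        - β * ∑ y, ∑ z, (((((∑ x'', P.p x'' y * c x'' z)) + ε * ((∑ x'', P.p x'' y * h x'' z))) * Real.log (((∑ x'', P.p x'' y * c x'' z)) + ε * ((∑ x'', P.p x'' y * h x'' z))) - blk (∑ x'', P.p x'' y * c x'' z) (∑ x'', P.p x'' y * h x'' z) (∑ x'', P.p x'' y * c x'' z) (∑ x'', P.p x'' y * h x'' z) ε) - ((((∑ x'', P.p x'' y * c x'' z)) + ε * ((∑ x'', P.p x'' y * h x'' z))) * Real.log (P.pY y) - blk (∑ x'', P.p x'' y * c x'' z) (∑ x'', P.p x'' y * h x'' z) (P.pY y) 0 ε) - ((((∑ x'', P.p x'' y * c x'' z)) + ε * ((∑ x'', P.p x'' y * h x'' z))) * Real.log (((∑ x'', P.pX x'' * c x'' z)) + ε * ((∑ x'', P.pX x'' * h x'' z))) - blk (∑ x'', P.p x'' y * c x'' z) (∑ x'', P.p x'' y * h x'' z) (∑ x'', P.pX x'' * c x'' z) (∑ x'', P.pX x'' * h x'' z) ε)))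
      =O[𝓝 (0:ℝ)] fun ε => ε ^ 3 := by
    apply IsBigO.sub
    · apply IsBigO.fun_sum
      intro x _
      apply IsBigO.fun_sum
      intro z _
      exact (blkBigO _ _ _ _ (hc x z)).sub (blkBigO _ _ _ _ (hq z))
    · apply IsBigO.const_mul_left
      apply IsBigO.fun_sum
      intro y _
      apply IsBigO.fun_sum
      intro z _
      refine ((blkBigO _ _ _ _ (hr y z)).sub ?_).sub (blkBigO _ _ _ _ (hq z))
      simpa using blkBigO ((∑ x'', P.p x'' y * c x'' z)) ((∑ x'', P.p x'' y * h x'' z)) (P.pY y) 0 (hpY y)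
  exact hO.congr' (Filter.EventuallyEq.symm hmain) (Filter.EventuallyEq.refl _ _)
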